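/- Let α > 1, β > 1, and q ≥ α/β be real numbers. Then there exists a constant C > 0 such that for all λ > 0, the series ∑_{i=1}^{∞} i^{-α}/(i^{-β} + λ)^q converges and satisfies ∑_{i=1}^{∞} i^{-α}/(i^{-β} + λ)^q ≤ C · λ^{-(1 + βq − α)/β}. -/

import Mathlib

set_option maxHeartbeats 1000000

open Real Finset

/-- Bernoulli-type step: for `x ≥ 1`, `(α-1)(x+1)^(-α) ≤ x^(1-α) - (x+1)^(1-α)`. -/
lemma stmt6_step {α : ℝ} (hα : 1 < α) {x : ℝ} (hx : 1 ≤ x) :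
    (α - 1) * (x + 1) ^ (-α) ≤ x ^ (1 - α) - (x + 1) ^ (1 - α) := by
  set p := α - 1 with hp
  have hp0 : 0 < p := by simp only [hp]; linarith
  have hx0 : (0:ℝ) < x := by linarith
  have hx1 : (0:ℝ) < x + 1 := by linarith
  have h1xpos : (0:ℝ) < 1 / x := by positivity
  -- key : (1 + 1/x)^p ≥ 1 + p/(x+1)
  have hkey : 1 + p / (x + 1) ≤ (1 + 1 / x) ^ p := by
    rcases le_or_gt 1 p with h1p | hp1
    · have h1 : p / (x + 1) ≤ p / x := div_le_div_of_nonneg_left hp0.le hx0 (by linarith)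
      calc 1 + p / (x + 1) ≤ 1 + p * (1 / x) := by rw [mul_one_div]; linarith
        _ ≤ (1 + 1 / x) ^ p :=
            one_add_mul_self_le_rpow_one_add (by linarith) h1p
    · have hb : (1 + (-(1 / (x + 1)))) ^ p ≤ 1 + p * (-(1 / (x + 1))) := by
        apply rpow_one_add_le_one_add_mul_self _ hp0.le hp1.le
        rw [neg_le, neg_neg, div_le_one hx1]; linarith
      have hform : 1 + (-(1 / (x + 1))) = x / (x + 1) := by field_simp; ring
      have hu1 : p / (x + 1) < 1 := by rw [div_lt_one hx1]; linarith
      have hu0 : 0 ≤ p / (x + 1) := by positivity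
      have hpos : (0:ℝ) < (x / (x + 1)) ^ p := by positivity
      have hb' : (x / (x + 1)) ^ p ≤ 1 - p / (x + 1) := by
        rw [← hform]
        calc (1 + (-(1 / (x + 1)))) ^ p ≤ 1 + p * (-(1 / (x + 1))) := hb
          _ = 1 - p / (x + 1) := by ring
      have h2 : (1 + p / (x + 1)) * (x / (x + 1)) ^ p ≤ 1 := by
        calc (1 + p / (x + 1)) * (x / (x + 1)) ^ p
            ≤ (1 + p / (x + 1)) * (1 - p / (x + 1)) :=
              mul_le_mul_of_nonneg_left hb' (by positivity)
          _ = 1 - (p / (x + 1)) ^ 2 := by ring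
          _ ≤ 1 := by nlinarith
      have h3 : 1 + p / (x + 1) ≤ ((x / (x + 1)) ^ p)⁻¹ := by
        rw [inv_eq_one_div, le_div_iff₀ hpos]; linarith
      calc 1 + p / (x + 1) ≤ ((x / (x + 1)) ^ p)⁻¹ := h3
        _ = (1 + 1 / x) ^ p := by
            have h1x : (1:ℝ) + 1 / x = (x + 1) / x := by field_simp
            rw [h1x, show (x + 1) / x = (x / (x + 1))⁻¹ by rw [inv_div],
              Real.inv_rpow (by positivity)]
  -- now multiply through
  have hmain : x ^ (1 - α) = (x + 1) ^ (1 - α) * (1 + 1 / x) ^ p := by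
    have h1x : (1:ℝ) + 1 / x = (x + 1) / x := by field_simp
    rw [h1x, Real.div_rpow hx1.le hx0.le]
    rw [show (1 : ℝ) - α = -p by ring, Real.rpow_neg hx1.le, Real.rpow_neg hx0.le]
    field_simp
  have hne : (0:ℝ) < (x + 1) ^ (1 - α) := by positivity
  have hmul : (x + 1) ^ (1 - α) * (1 + p / (x + 1)) ≤ x ^ (1 - α) := by
    rw [hmain]; exact mul_le_mul_of_nonneg_left hkey hne.le
  have hexp : (x + 1) ^ (1 - α) * (p / (x + 1)) = p * (x + 1) ^ (-α) := by
    rw [show (-α : ℝ) = (1 - α) + (-1) by ring, Real.rpow_add hx1, Real.rpow_neg_one]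
    field_simp
  have hexpand : (x + 1) ^ (1 - α) * (1 + p / (x + 1))
      = (x + 1) ^ (1 - α) + p * (x + 1) ^ (-α) := by
    rw [mul_add, mul_one, hexp]
  rw [hexpand] at hmul
  linarith

/-- Tail bound: for `N ≥ 1`, `∑_j (j + N + 1)^{-α} ≤ N^{1-α}/(α-1)`. -/
lemma stmt6_tail {α : ℝ} (hα : 1 < α) (N : ℕ) (hN : 1 ≤ N) :
    ∑' j : ℕ, ((j : ℝ) + N + 1) ^ (-α) ≤ (N : ℝ) ^ (1 - α) / (α - 1) := by
  have hN1 : (1:ℝ) ≤ N := by exact_mod_cast hN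
  have hsum : Summable (fun j : ℕ => ((j : ℝ) + N + 1) ^ (-α)) := by
    have h0 : Summable (fun n : ℕ => (n : ℝ) ^ (-α)) :=
      Real.summable_nat_rpow.2 (by linarith)
    have := (summable_nat_add_iff (N + 1)).2 h0
    apply this.congr
    intro j; push_cast; ring_nf
  apply hsum.tsum_le_of_sum_range_le
  intro n
  set g : ℕ → ℝ := fun j => ((N : ℝ) + j) ^ (1 - α) with hg
  have hstep : ∀ j : ℕ, ((j : ℝ) + N + 1) ^ (-α) ≤ (g j - g (j + 1)) / (α - 1) := by
    intro j
    rw [le_div_iff₀ (by linarith)]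
    have h := stmt6_step hα (x := (N:ℝ) + j)
      (by have : (0:ℝ) ≤ j := Nat.cast_nonneg j; linarith)
    have e1 : ((j : ℝ) + N + 1) ^ (-α) * (α - 1)
        = (α - 1) * (((N:ℝ) + j) + 1) ^ (-α) := by ring_nf
    have e2 : g (j + 1) = (((N:ℝ) + j) + 1) ^ (1 - α) := by
      simp only [hg]; push_cast; ring_nf
    have e3 : g j = ((N:ℝ) + j) ^ (1 - α) := rfl
    rw [e1, e2, e3]; linarith
  have hg0 : g 0 = (N : ℝ) ^ (1 - α) := by simp [hg]
  have hgn : 0 ≤ g n := Real.rpow_nonneg (by positivity) _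
  calc ∑ j ∈ range n, ((j : ℝ) + N + 1) ^ (-α)
      ≤ ∑ j ∈ range n, (g j - g (j + 1)) / (α - 1) :=
        Finset.sum_le_sum fun j _ => hstep j
    _ = (∑ j ∈ range n, (g j - g (j + 1))) / (α - 1) := by rw [Finset.sum_div]
    _ = (g 0 - g n) / (α - 1) := by rw [Finset.sum_range_sub' g n]
    _ ≤ (N : ℝ) ^ (1 - α) / (α - 1) := by
        rw [hg0] at *; gcongr <;> linarith

theorem stmt_6 (α β q : ℝ) (hα : 1 < α) (hβ : 1 < β) (hq : α / β ≤ q) :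
    ∃ C > (0 : ℝ), ∀ lam > (0 : ℝ),
      Summable (fun i : ℕ =>
        ((i : ℝ) + 1) ^ (-α) / (((i : ℝ) + 1) ^ (-β) + lam) ^ q) ∧
      ∑' i : ℕ, ((i : ℝ) + 1) ^ (-α) / (((i : ℝ) + 1) ^ (-β) + lam) ^ q
        ≤ C * lam ^ (-(1 + β * q - α) / β) := by
  have hβ0 : (0:ℝ) < β := by linarith
  have hq0 : (0:ℝ) < q := lt_of_lt_of_le (by positivity) hq
  have hβq : α ≤ β * q := by
    have := (div_le_iff₀ hβ0).1 hq; linarith [mul_comm q β]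
  have hE1 : (1:ℝ) ≤ 1 + β * q - α := by linarith
  have hSsum : Summable (fun i : ℕ => ((i : ℝ) + 1) ^ (-α)) := by
    have h0 : Summable (fun n : ℕ => (n : ℝ) ^ (-α)) :=
      Real.summable_nat_rpow.2 (by linarith)
    have := (summable_nat_add_iff 1).2 h0
    apply this.congr
    intro j; push_cast; ring_nf
  set S := ∑' i : ℕ, ((i : ℝ) + 1) ^ (-α) with hS
  have hS0 : 0 ≤ S := tsum_nonneg fun i => by positivity
  have h2E : (0:ℝ) < 2 ^ (1 + β * q - α) := Real.rpow_pos_of_pos (by norm_num) _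
  have hinv : (0:ℝ) < 1 / (α - 1) := by
    apply one_div_pos.2; linarith
  refine ⟨S + 2 ^ (1 + β * q - α) + 1 / (α - 1), by linarith, ?_⟩
  intro lam hlam
  have hB : ∀ i : ℕ, ((i : ℝ) + 1) ^ (-α) / (((i : ℝ) + 1) ^ (-β) + lam) ^ q
      ≤ ((i : ℝ) + 1) ^ (-α) * lam ^ (-q) := by
    intro i
    rw [Real.rpow_neg hlam.le, ← div_eq_mul_inv]
    apply div_le_div_of_nonneg_left (by positivity) (Real.rpow_pos_of_pos hlam q)
    exact Real.rpow_le_rpow hlam.le (le_add_of_nonneg_left (by positivity)) hq0.le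
  have hsumB : Summable (fun i : ℕ => ((i : ℝ) + 1) ^ (-α) * lam ^ (-q)) :=
    hSsum.mul_right _
  have hsum : Summable (fun i : ℕ =>
      ((i : ℝ) + 1) ^ (-α) / (((i : ℝ) + 1) ^ (-β) + lam) ^ q) :=
    Summable.of_nonneg_of_le (fun i => by positivity) hB hsumB
  refine ⟨hsum, ?_⟩
  have hLnn : 0 ≤ lam ^ (-(1 + β * q - α) / β) := Real.rpow_nonneg hlam.le _
  rcases le_or_gt 1 lam with hl | hl
  · -- large lambda : use the crude bound
    calc ∑' i : ℕ, ((i : ℝ) + 1) ^ (-α) / (((i : ℝ) + 1) ^ (-β) + lam) ^ q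
        ≤ ∑' i : ℕ, ((i : ℝ) + 1) ^ (-α) * lam ^ (-q) := Summable.tsum_le_tsum hB hsum hsumB
      _ = S * lam ^ (-q) := tsum_mul_right
      _ ≤ S * lam ^ (-(1 + β * q - α) / β) := by
          apply mul_le_mul_of_nonneg_left _ hS0
          apply Real.rpow_le_rpow_of_exponent_le hl
          rw [neg_div, neg_le_neg_iff, div_le_iff₀ hβ0]
          nlinarith
      _ ≤ (S + 2 ^ (1 + β * q - α) + 1 / (α - 1)) * lam ^ (-(1 + β * q - α) / β) := by
          apply mul_le_mul_of_nonneg_right (by linarith) hLnn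
  · -- small lambda : split at N = ceil(lam^(-1/beta))
    set t := lam ^ (-1 / β) with ht
    have ht1 : 1 < t :=
      (Real.one_lt_rpow_iff_of_pos hlam).2 (Or.inr ⟨hl, by rw [neg_div, neg_lt_zero]; positivity⟩)
    have ht0 : 0 < t := by linarith
    set N := ⌈t⌉₊ with hNdef
    have hN1 : 1 ≤ N := Nat.one_le_ceil_iff.2 ht0
    have htN : t ≤ (N : ℝ) := Nat.le_ceil t
    have hN2t : (N : ℝ) ≤ 2 * t := by
      have := Nat.ceil_lt_add_one ht0.le; linarith
    have hNpos : (0:ℝ) < N := by exact_mod_cast hN1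
    have hte : ∀ c : ℝ, t ^ c = lam ^ (-c / β) := by
      intro c
      rw [ht, ← Real.rpow_mul hlam.le, show -1 / β * c = -c / β by ring]
    rw [← Summable.sum_add_tsum_nat_add N hsum]
    have hhead : ∑ i ∈ Finset.range N,
        ((i : ℝ) + 1) ^ (-α) / (((i : ℝ) + 1) ^ (-β) + lam) ^ q
        ≤ 2 ^ (1 + β * q - α) * lam ^ (-(1 + β * q - α) / β) := by
      have hterm : ∀ i ∈ Finset.range N,
          ((i : ℝ) + 1) ^ (-α) / (((i : ℝ) + 1) ^ (-β) + lam) ^ q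
          ≤ (N : ℝ) ^ (β * q - α) := by
        intro i hi
        have hi1 : (0:ℝ) < (i : ℝ) + 1 := by positivity
        have hiN : (i : ℝ) + 1 ≤ N := by
          have := Finset.mem_range.1 hi; exact_mod_cast Nat.succ_le_of_lt this
        calc ((i : ℝ) + 1) ^ (-α) / (((i : ℝ) + 1) ^ (-β) + lam) ^ q
            ≤ ((i : ℝ) + 1) ^ (-α) / (((i : ℝ) + 1) ^ (-β)) ^ q := by
              apply div_le_div_of_nonneg_left (by positivity) (by positivity)
              exact Real.rpow_le_rpow (by positivity)
                (le_add_of_nonneg_right hlam.le) hq0.le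
          _ = ((i : ℝ) + 1) ^ (β * q - α) := by
              rw [← Real.rpow_mul hi1.le, ← Real.rpow_sub hi1]
              congr 1; ring
          _ ≤ (N : ℝ) ^ (β * q - α) :=
              Real.rpow_le_rpow (by positivity) hiN (by linarith)
      calc ∑ i ∈ Finset.range N,
            ((i : ℝ) + 1) ^ (-α) / (((i : ℝ) + 1) ^ (-β) + lam) ^ q
          ≤ ∑ _i ∈ Finset.range N, (N : ℝ) ^ (β * q - α) :=
            Finset.sum_le_sum hterm
        _ = (N : ℝ) * (N : ℝ) ^ (β * q - α) := by
            rw [Finset.sum_const, Finset.card_range, nsmul_eq_mul]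
        _ = (N : ℝ) ^ (1 + β * q - α) := by
            rw [show (1:ℝ) + β * q - α = 1 + (β * q - α) by ring,
              Real.rpow_add hNpos, Real.rpow_one]
        _ ≤ (2 * t) ^ (1 + β * q - α) :=
            Real.rpow_le_rpow (by positivity) hN2t (by linarith)
        _ = 2 ^ (1 + β * q - α) * t ^ (1 + β * q - α) :=
            Real.mul_rpow (by norm_num) ht0.le
        _ = 2 ^ (1 + β * q - α) * lam ^ (-(1 + β * q - α) / β) := by rw [hte]
    have htail : ∑' j : ℕ,
        (((j + N : ℕ) : ℝ) + 1) ^ (-α) / ((((j + N : ℕ) : ℝ) + 1) ^ (-β) + lam) ^ q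
        ≤ 1 / (α - 1) * lam ^ (-(1 + β * q - α) / β) := by
      have hsumT : Summable (fun j : ℕ => (((j + N : ℕ) : ℝ) + 1) ^ (-α) * lam ^ (-q)) :=
        ((summable_nat_add_iff N).2 hSsum).mul_right _
      have hLq : (0:ℝ) ≤ lam ^ (-q) := Real.rpow_nonneg hlam.le _
      calc ∑' j : ℕ,
            (((j + N : ℕ) : ℝ) + 1) ^ (-α) / ((((j + N : ℕ) : ℝ) + 1) ^ (-β) + lam) ^ q
          ≤ ∑' j : ℕ, (((j + N : ℕ) : ℝ) + 1) ^ (-α) * lam ^ (-q) :=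
            Summable.tsum_le_tsum (fun j => hB (j + N)) ((summable_nat_add_iff N).2 hsum) hsumT
        _ = (∑' j : ℕ, (((j + N : ℕ) : ℝ) + 1) ^ (-α)) * lam ^ (-q) := tsum_mul_right
        _ = (∑' j : ℕ, ((j : ℝ) + N + 1) ^ (-α)) * lam ^ (-q) := by
            congr 1
            apply tsum_congr
            intro j
            congr 1
            push_cast; ring
        _ ≤ ((N : ℝ) ^ (1 - α) / (α - 1)) * lam ^ (-q) :=
            mul_le_mul_of_nonneg_right (stmt6_tail hα N hN1) hLq
        _ ≤ (t ^ (1 - α) / (α - 1)) * lam ^ (-q) := by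
            apply mul_le_mul_of_nonneg_right _ hLq
            apply div_le_div_of_nonneg_right _ (by linarith)
            exact Real.rpow_le_rpow_of_nonpos ht0 htN (by linarith)
        _ = 1 / (α - 1) * lam ^ (-(1 + β * q - α) / β) := by
            rw [hte (1 - α),
              show -(1 + β * q - α) / β = -(1 - α) / β + -q by field_simp; ring,
              Real.rpow_add hlam]
            ring
    calc (∑ i ∈ Finset.range N,
          ((i : ℝ) + 1) ^ (-α) / (((i : ℝ) + 1) ^ (-β) + lam) ^ q)
        + ∑' j : ℕ,
          (((j + N : ℕ) : ℝ) + 1) ^ (-α) / ((((j + N : ℕ) : ℝ) + 1) ^ (-β) + lam) ^ q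
        ≤ 2 ^ (1 + β * q - α) * lam ^ (-(1 + β * q - α) / β)
          + 1 / (α - 1) * lam ^ (-(1 + β * q - α) / β) := add_le_add hhead htail
      _ ≤ (S + 2 ^ (1 + β * q - α) + 1 / (α - 1)) * lam ^ (-(1 + β * q - α) / β) := by
          nlinarith [hLnn, hS0]
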